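/- For any d > 1 and either choice of sign ε ∈ {±1}, there exists a monic irreducible polynomial 𝔭 of degree d in F_q[T] such that the quadratic character of T modulo 𝔭 equals ε. -/

import Mathlib

open Polynomial Module

universe u_aux

/-- Existence of a field extension of a finite field with prescribed degree. -/
lemma aux_exists_ext (Fq : Type u_aux) [Field Fq] [Fintype Fq] (d : ℕ) (hd : 0 < d) :
    ∃ (K : Type u_aux) (_ : Field K) (_ : Algebra Fq K) (_ : Fintype K),
      Fintype.card K = Fintype.card Fq ^ d ∧ Module.finrank Fq K = d := by
  classical
  set q := Fintype.card Fq with hq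
  have hq2 : 1 < q := Fintype.one_lt_card
  set p := ringChar Fq with hp
  haveI : CharP Fq p := ringChar.charP Fq
  obtain ⟨n, hp_prime, hcardq⟩ := FiniteField.card Fq p
  haveI := Fact.mk hp_prime
  set f : Fq[X] := X ^ q ^ d - X with hf
  let K := f.SplittingField
  haveI : CharP K p := (Algebra.charP_iff Fq K p).mp ‹_›
  haveI : ExpChar K p := ExpChar.prime hp_prime
  haveI : Finite K := Module.finite_of_finite Fq
  haveI : Fintype K := Fintype.ofFinite K
  have hqpn : q = p ^ (n : ℕ) := hcardq
  have hpq : p ∣ q ^ d := by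
    refine dvd_trans ?_ (dvd_pow_self q hd.ne')
    rw [hqpn]
    exact dvd_pow_self p n.pos.ne'
  have hsep : f.Separable := galois_poly_separable p (q ^ d) hpq
  have hfne : f ≠ 0 := FiniteField.X_pow_card_pow_sub_X_ne_zero _ hd.ne' hq2
  have key : Fintype.card (f.rootSet K) = f.natDegree :=
    card_rootSet_eq_natDegree hsep (SplittingField.splits f)
  have ndeg : f.natDegree = q ^ d := FiniteField.X_pow_card_pow_sub_X_natDegree_eq _ hd.ne' hq2
  set m := (n : ℕ) * d with hm
  have hQ : q ^ d = p ^ m := by rw [hqpn, hm, pow_mul]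
  set S : Subring K := RingHom.eqLocus (iterateFrobenius K p m) (RingHom.id K) with hS
  have hmemS : ∀ x : K, x ∈ S ↔ x ^ q ^ d = x := by
    intro x
    rw [hQ]
    constructor
    · intro hx
      have : iterateFrobenius K p m x = RingHom.id K x := hx
      rwa [iterateFrobenius_def, RingHom.id_apply] at this
    · intro hx
      show iterateFrobenius K p m x = RingHom.id K x
      rwa [iterateFrobenius_def, RingHom.id_apply]
  have haev : ∀ x : K, aeval x f = x ^ q ^ d - x := by
    intro x
    show aeval x (X ^ q ^ d - X : Fq[X]) = _
    simp only [map_sub, aeval_X_pow, aeval_X]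
  have hroot_sub : f.rootSet K ⊆ S := by
    intro x hx
    rw [mem_rootSet_of_ne hfne, haev x, sub_eq_zero] at hx
    exact (hmemS x).mpr hx
  have halg : Set.range (algebraMap Fq K) ⊆ S := by
    rintro _ ⟨r, rfl⟩
    rw [SetLike.mem_coe, hmemS, ← map_pow, FiniteField.pow_card_pow]
  have hU : f.rootSet K = Set.univ := by
    rw [Set.eq_univ_iff_forall]
    intro x
    have hx : x ∈ Algebra.adjoin Fq (f.rootSet K) := by
      rw [SplittingField.adjoin_rootSet]; trivial
    rw [Algebra.mem_adjoin_iff] at hx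
    have hxS : x ∈ S := Subring.closure_le.mpr (Set.union_subset halg hroot_sub) hx
    rw [mem_rootSet_of_ne hfne, haev x, sub_eq_zero]
    exact (hmemS x).mp hxS
  rw [ndeg] at key
  have hcard : Fintype.card K = q ^ d := by
    have e : f.rootSet K ≃ K := (Equiv.setCongr hU).trans (Equiv.Set.univ K)
    rw [← Fintype.card_congr e]
    exact key
  have hrank : Module.finrank Fq K = d := by
    have h2 := hcard
    rw [card_eq_pow_finrank (K := Fq) (V := K)] at h2
    exact Nat.pow_right_injective hq2 h2
  exact ⟨K, inferInstance, inferInstance, inferInstance, hcard, hrank⟩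

/-- The quadratic character of a generating element transfers to the quotient by
its minimal polynomial. -/
lemma aux_minpoly (Fq : Type*) [Field Fq] [Fintype Fq] {K : Type*} [Field K] [Fintype K]
    [Algebra Fq K] [FiniteDimensional Fq K] (d : ℕ) (hd : 0 < d)
    (hrank : Module.finrank Fq K = d) (α : K) (hα0 : α ≠ 0)
    (hkey : ∀ e : ℕ, e ∣ d → orderOf α ≤ Fintype.card Fq ^ e - 1 → e = d) :
    ∃ 𝔭 : Polynomial Fq, 𝔭.Monic ∧ Irreducible 𝔭 ∧ 𝔭.natDegree = d ∧
      (IsSquare ((Ideal.Quotient.mk (Ideal.span {𝔭})) (Polynomial.X : Polynomial Fq)) ↔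
        IsSquare α) := by
  classical
  have hint : IsIntegral Fq α := Algebra.IsIntegral.isIntegral α
  set 𝔭 := minpoly Fq α with h𝔭
  have hmonic : 𝔭.Monic := minpoly.monic hint
  have hirr : Irreducible 𝔭 := minpoly.irreducible hint
  -- degree of the minimal polynomial
  set F := IntermediateField.adjoin Fq {α} with hF
  haveI : Fintype F := Fintype.ofFinite F
  have hdegF : Module.finrank Fq F = 𝔭.natDegree := IntermediateField.adjoin.finrank hint
  have hdvd : Module.finrank Fq F ∣ d := by
    refine ⟨Module.finrank F K, ?_⟩
    rw [Module.finrank_mul_finrank Fq F K, hrank]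
  have hordle : orderOf α ≤ Fintype.card Fq ^ Module.finrank Fq F - 1 := by
    set β : F := IntermediateField.AdjoinSimple.gen Fq α with hβ
    have hβα : (β : K) = α := rfl
    have hordβ : orderOf α = orderOf β := by
      rw [← hβα]
      exact orderOf_injective (F.val : F →* K)
        (fun a b hab => Subtype.ext hab) β
    rw [hordβ]
    have h0 : β ≠ 0 := by
      intro h
      apply hα0
      rw [← hβα, h]
      rfl
    · have h1 : β ^ (Fintype.card F - 1) = 1 := FiniteField.pow_card_sub_one_eq_one β h0
      have h2 : orderOf β ∣ Fintype.card F - 1 := orderOf_dvd_of_pow_eq_one h1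
      have h3 : 0 < Fintype.card F - 1 := by
        have := Fintype.one_lt_card (α := F)
        omega
      have h4 := Nat.le_of_dvd h3 h2
      rwa [card_eq_pow_finrank (K := Fq) (V := F)] at h4
  have hdeg : 𝔭.natDegree = d := by
    rw [← hdegF]
    exact hkey _ hdvd hordle
  refine ⟨𝔭, hmonic, hirr, hdeg, ?_⟩
  -- transfer IsSquare through the isomorphism AdjoinRoot 𝔭 ≃ K
  haveI := Fact.mk hirr
  set φ : AdjoinRoot 𝔭 →ₐ[Fq] K := AdjoinRoot.liftAlgHom 𝔭 (Algebra.ofId Fq K) α (minpoly.aeval Fq α) with hφ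
  have hinj : Function.Injective φ := φ.toRingHom.injective
  haveI : FiniteDimensional Fq (AdjoinRoot 𝔭) :=
    (AdjoinRoot.powerBasis (f := 𝔭) (minpoly.ne_zero hint)).finite
  have hdim : Module.finrank Fq (AdjoinRoot 𝔭) = Module.finrank Fq K := by
    have h := (AdjoinRoot.powerBasis (f := 𝔭) (minpoly.ne_zero hint)).finrank
    rw [AdjoinRoot.powerBasis_dim] at h
    rw [h, hdeg, hrank]
  have hsurj : Function.Surjective φ := by
    have h := (LinearMap.injective_iff_surjective_of_finrank_eq_finrank
      (f := φ.toLinearMap) hdim).mp hinj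
    exact h
  have hroot : φ (AdjoinRoot.root 𝔭) = α := by
    rw [hφ]; exact AdjoinRoot.liftAlgHom_root _ _ _ _
  have hmkX : (Ideal.Quotient.mk (Ideal.span {𝔭})) (Polynomial.X : Polynomial Fq) =
      AdjoinRoot.root 𝔭 := rfl
  rw [hmkX]
  change IsSquare (AdjoinRoot.root 𝔭) ↔ IsSquare α
  constructor
  · rintro ⟨r, hr⟩
    exact ⟨φ r, by rw [← hroot, hr, map_mul]⟩
  · rintro ⟨y, hy⟩
    obtain ⟨z, rfl⟩ := hsurj y
    refine ⟨z, hinj ?_⟩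
    rw [map_mul, hroot, hy]

/-- For any `d > 1` and either choice of sign `ε ∈ {±1}`, there exists a monic irreducible
polynomial `𝔭` of degree `d` in `F_q[T]` (`q` odd) such that the quadratic character of `T`
modulo `𝔭` equals `ε`, i.e. the image of `T` in `A/𝔭` is a square exactly when `ε = 1`. -/
theorem exists_irreducible_with_prescribed_quadratic_character_of_T
    (Fq : Type*) [Field Fq] [Fintype Fq] (hq : Odd (Fintype.card Fq))
    (d : ℕ) (hd : 1 < d) (ε : ℤ) (hε : ε = 1 ∨ ε = -1) :
    ∃ 𝔭 : Polynomial Fq, 𝔭.Monic ∧ Irreducible 𝔭 ∧ 𝔭.natDegree = d ∧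
      (IsSquare ((Ideal.Quotient.mk (Ideal.span {𝔭})) (Polynomial.X : Polynomial Fq)) ↔
        ε = 1) := by
  classical
  obtain ⟨K, _, _, _, hcard, hrank⟩ := aux_exists_ext Fq d (by omega)
  set q := Fintype.card Fq with hq'
  have hq2 : 1 < q := Fintype.one_lt_card
  have hq3 : 3 ≤ q := by
    rcases hq with ⟨k, hk⟩
    omega
  haveI : FiniteDimensional Fq K := Module.finite_of_finrank_pos (by omega : 0 < Module.finrank Fq K)
  have hqd_odd : Odd (q ^ d) := hq.pow
  have hqd9 : 9 ≤ q ^ d := by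
    calc (9 : ℕ) = 3 ^ 2 := rfl
    _ ≤ q ^ 2 := Nat.pow_le_pow_left hq3 2
    _ ≤ q ^ d := Nat.pow_le_pow_right (by omega) hd
  obtain ⟨g, hg⟩ := IsCyclic.exists_generator (α := Kˣ)
  have hordg : orderOf (g : K) = q ^ d - 1 := by
    rw [orderOf_units, orderOf_eq_card_of_forall_mem_zpowers hg, Nat.card_eq_fintype_card,
      Fintype.card_units, hcard]
  have h2dvd : 2 ∣ q ^ d - 1 := by
    rcases hqd_odd with ⟨k, hk⟩
    omega
  rcases hε with hε | hε
  · -- ε = 1 : use the square of a generator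
    subst hε
    set α : K := (g : K) * (g : K) with hα
    have hαsq : α = (g : K) ^ 2 := by rw [hα, sq]
    have hord : orderOf α = (q ^ d - 1) / 2 := by
      rw [hαsq, orderOf_pow' (g : K) (two_ne_zero), hordg, Nat.gcd_eq_right h2dvd]
    have hkey : ∀ e : ℕ, e ∣ d → orderOf α ≤ q ^ e - 1 → e = d := by
      intro e he hle
      rw [hord] at hle
      by_contra hne
      have hed : e < d := lt_of_le_of_ne (Nat.le_of_dvd (by omega) he) hne
      obtain ⟨k, hk⟩ := he
      have hk2 : 2 ≤ k := by
        rcases Nat.lt_or_ge k 2 with h | h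
        · interval_cases k <;> omega
        · exact h
      have he1 : 1 ≤ e := by
        by_contra h
        have : e = 0 := by omega
        subst this
        simp at hle
        omega
      have hq_e : 3 ≤ q ^ e := le_trans hq3 (Nat.le_self_pow (by omega) q)
      have hqd_ge : q ^ e * q ^ e ≤ q ^ d := by
        calc q ^ e * q ^ e = q ^ (e * 2) := by rw [pow_mul, sq]
        _ ≤ q ^ d := Nat.pow_le_pow_right (by omega)
          (by rw [hk]; exact Nat.mul_le_mul_left e hk2)
      have h2m : 2 * ((q ^ d - 1) / 2) = q ^ d - 1 := by omega
      have h3B : 3 * q ^ e ≤ q ^ e * q ^ e := Nat.mul_le_mul_right _ hq_e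
      omega
    obtain ⟨𝔭, h1, h2, h3, h4⟩ := aux_minpoly Fq d (by omega) hrank α
      (by simp [hα, Units.ne_zero]) hkey
    refine ⟨𝔭, h1, h2, h3, ?_⟩
    rw [h4]
    simp only [iff_true_intro rfl, iff_true]
    exact ⟨(g : K), rfl⟩
  · -- ε = -1 : use a generator itself
    subst hε
    set α : K := (g : K) with hα
    have hkey : ∀ e : ℕ, e ∣ d → orderOf α ≤ q ^ e - 1 → e = d := by
      intro e he hle
      rw [hordg] at hle
      have : q ^ d ≤ q ^ e := by
        have h1 : 1 ≤ q ^ e := Nat.one_le_pow _ _ (by omega)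
        omega
      have hde : d ≤ e := by
        by_contra h
        have := Nat.pow_lt_pow_right hq2 (by omega : e < d)
        omega
      exact le_antisymm (Nat.le_of_dvd (by omega) he) hde
    obtain ⟨𝔭, h1, h2, h3, h4⟩ := aux_minpoly Fq d (by omega) hrank α (Units.ne_zero g) hkey
    refine ⟨𝔭, h1, h2, h3, ?_⟩
    rw [h4]
    constructor
    · rintro ⟨x, hx⟩
      exfalso
      have hx0 : x ≠ 0 := by
        rintro rfl
        rw [mul_zero] at hx
        exact (Units.ne_zero g) (by rw [hα] at hx; exact_mod_cast hx)
      have hpow : α ^ ((q ^ d - 1) / 2) = 1 := by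
        have hs : α ^ ((q ^ d - 1) / 2) = x ^ (q ^ d - 1) := by
          rw [hx, ← sq, ← pow_mul]
          congr 1
          omega
        rw [hs, ← hcard, FiniteField.pow_card_sub_one_eq_one x hx0]
      have hdvd2 := orderOf_dvd_of_pow_eq_one hpow
      rw [hordg] at hdvd2
      have := Nat.le_of_dvd (by omega) hdvd2
      omega
    · intro h
      exact absurd h (by decide)
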